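/- Let λ ⊢ n and let CSS(λ) be the column super-strict tableau of shape λ. For every P ∈ SYT(λ), the unique permutation v ∈ S_n with v ↝ (P, CSS(λ)) under the RSK correspondence has one-line notation obtained by reading the entries of P column by column from left to right, each column from bottom to top. -/

import Mathlib

namespace KLPaper

open Equiv

/-! ### Partitions and standard Young tableaux, represented as lists of rows -/

/-- `lam` is a partition of `n`: a weakly decreasing list of positive parts summing to `n`. -/
def IsPartition (n : ℕ) (lam : List ℕ) : Prop :=
  lam.Pairwise (· ≥ ·) ∧ (∀ x ∈ lam, 0 < x) ∧ lam.sum = n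

/-- The entry of a tableau in row `i`, column `j` (0-based); `0` if out of range. -/
def entryAt (T : List (List ℕ)) (i j : ℕ) : ℕ := (T.getD i []).getD j 0

/-- `T` is a standard Young tableau of shape `lam`: rows have the prescribed lengths,
rows and columns strictly increase, and the multiset of entries is `{1, …, n}`. -/
def IsSYT (lam : List ℕ) (T : List (List ℕ)) : Prop :=
  T.map List.length = lam ∧
  (∀ r ∈ T, r.Pairwise (· < ·)) ∧
  (∀ i j : ℕ, i + 1 < T.length → j < (T.getD (i + 1) []).length →
    entryAt T i j < entryAt T (i + 1) j) ∧
  T.flatten.Perm (List.range' 1 lam.sum)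

/-- The (0-based) index of the row of a tableau containing the value `v`. -/
def rowOf (T : List (List ℕ)) (v : ℕ) : ℕ := T.findIdx (fun r => r.contains v)

/-- The (0-based) index of the column of a tableau containing the value `v`. -/
def colOf (T : List (List ℕ)) (v : ℕ) : ℕ := (T.getD (rowOf T v) []).idxOf v

/-- `j` is a descent of `T` : the value `j+1` lies in a strictly lower row than `j`. -/
def Descent (T : List (List ℕ)) (j : ℕ) : Prop := rowOf T j < rowOf T (j + 1)

/-- The number of removable boxes of `lam` occurring in the rows `0, …, upto - 1`. -/
def removableCount (lam : List ℕ) (upto : ℕ) : ℕ :=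
  ((List.range upto).filter (fun i => decide (lam.getD (i + 1) 0 < lam.getD i 0))).length

/-- The total number of removable boxes of a partition. -/
def numRemovable (lam : List ℕ) : ℕ := removableCount lam lam.length

/-- The (1-based, numbered from the top) list of rows containing removable boxes. -/
def removableRows (lam : List ℕ) : List ℕ :=
  (List.range lam.length).filter (fun i => decide (lam.getD (i + 1) 0 < lam.getD i 0))

/-- The index of a standard Young tableau: the (1-based, counted from the top) number of the
removable box containing the largest entry `n`. -/
def idx (T : List (List ℕ)) : ℕ :=
  removableCount (T.map List.length) (rowOf T T.flatten.length + 1)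

/-- Delete the `i`-th (1-based) removable box from a partition. -/
def deleteRemovable (lam : List ℕ) (i : ℕ) : List ℕ :=
  let row := (removableRows lam).getD (i - 1) 0
  (lam.set row (lam.getD row 0 - 1)).filter (fun x => decide (0 < x))

/-- Delete the box containing the largest entry from a standard Young tableau. -/
def deleteMax (T : List (List ℕ)) : List (List ℕ) :=
  let i := rowOf T T.flatten.length
  (T.set i ((T.getD i []).dropLast)).filter (fun r => !r.isEmpty)

/-! ### Promotion and (partial) evacuation -/

/-- Overwrite the entry of `T` in position `(i, j)` with `v`. -/
def setEntry (T : List (List ℕ)) (i j v : ℕ) : List (List ℕ) :=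
  T.set i ((T.getD i []).set j v)

/-- Slide a hole at position `(i, j)` north-west to the corner `(0,0)`, at each step swapping
the hole with the larger of the entries above it and to its left. -/
def slideNW : ℕ → ℕ → ℕ → List (List ℕ) → List (List ℕ)
  | 0, _, _, T => T
  | fuel + 1, i, j, T =>
    if i = 0 ∧ j = 0 then T
    else if i = 0 then slideNW fuel i (j - 1) (setEntry T i j (entryAt T i (j - 1)))
    else if j = 0 then slideNW fuel (i - 1) j (setEntry T i j (entryAt T (i - 1) j))
    else if entryAt T i (j - 1) < entryAt T (i - 1) j then
      slideNW fuel (i - 1) j (setEntry T i j (entryAt T (i - 1) j))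
    else slideNW fuel i (j - 1) (setEntry T i j (entryAt T i (j - 1)))

/-- Jeu-de-taquin promotion of a standard Young tableau: remove the largest entry, slide the
hole to the north-west corner, increment every entry, and place `1` in the corner. -/
def promote (T : List (List ℕ)) : List (List ℕ) :=
  let n := T.flatten.length
  let i := rowOf T n
  let j := colOf T n
  let T' := slideNW (i + j) i j T
  setEntry (T'.map (fun r => r.map (· + 1))) 0 0 1

/-- Slide a hole at `(i, j)` south-east, at each step swapping the hole with the smaller of
its right and lower neighbours among the entries `≤ m`; stops when no such neighbour exists,
returning the resulting filling and the final position of the hole. -/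
def slideOut (m : ℕ) : ℕ → ℕ → ℕ → List (List ℕ) → List (List ℕ) × ℕ × ℕ
  | 0, i, j, T => (T, i, j)
  | fuel + 1, i, j, T =>
    let r := entryAt T i (j + 1)
    let d := entryAt T (i + 1) j
    let rOk := decide (1 ≤ r ∧ r ≤ m)
    let dOk := decide (1 ≤ d ∧ d ≤ m)
    if rOk && dOk then
      if r < d then slideOut m fuel i (j + 1) (setEntry T i j r)
      else slideOut m fuel (i + 1) j (setEntry T i j d)
    else if rOk then slideOut m fuel i (j + 1) (setEntry T i j r)
    else if dOk then slideOut m fuel (i + 1) j (setEntry T i j d)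
    else (T, i, j)

/-- Inverse promotion applied to the sub-standard-tableau consisting of the entries
`1, …, m` of `T` (the remaining entries are fixed): remove the entry `1`, slide the hole
south-east within the unfixed region, decrement the remaining unfixed entries and place `m`
in the final position of the hole. -/
def prInvOn (T : List (List ℕ)) (m : ℕ) : List (List ℕ) :=
  let res := slideOut m T.flatten.length 0 0 T
  setEntry (res.1.map (fun row => row.map (fun v => if 2 ≤ v ∧ v ≤ m then v - 1 else v)))
    res.2.1 res.2.2 m

/-- The partial evacuation `ev_k`: starting with the `k` smallest entries unfixed, repeatedly
perform inverse promotion on the unfixed entries and fix the largest unfixed entry.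
`evacOn T n` (where `n` is the number of boxes) is the Schützenberger involution. -/
def evacOn : List (List ℕ) → ℕ → List (List ℕ)
  | T, 0 => T
  | T, m + 1 => evacOn (prInvOn T (m + 1)) m

/-! ### RSK -/

/-- Schensted insertion of `x` into a row: returns the new row and the bumped entry. -/
def insertRow : List ℕ → ℕ → List ℕ × Option ℕ
  | [], x => ([x], none)
  | y :: ys, x =>
    if x < y then (x :: ys, some y)
    else
      let p := insertRow ys x
      (y :: p.1, p.2)

/-- Schensted row insertion of `x` into a tableau. -/
def insertTab : List (List ℕ) → ℕ → List (List ℕ)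
  | [], x => [[x]]
  | r :: rs, x =>
    let p := insertRow r x
    match p.2 with
    | none => p.1 :: rs
    | some y => p.1 :: insertTab rs y

/-- Add the label `k` to the recording tableau `Q` in the unique new box of `P'`. -/
def addBox (Q P' : List (List ℕ)) (k : ℕ) : List (List ℕ) :=
  match (List.range P'.length).find?
      (fun i => decide ((Q.getD i []).length < (P'.getD i []).length)) with
  | some i => if i < Q.length then Q.set i ((Q.getD i []) ++ [k]) else Q ++ [[k]]
  | none => Q

/-- RSK insertion of a word, producing the pair (insertion tableau, recording tableau). -/
def RSKword : List ℕ → ℕ → List (List ℕ) × List (List ℕ) → List (List ℕ) × List (List ℕ)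
  | [], _, PQ => PQ
  | x :: xs, k, PQ =>
    let P' := insertTab PQ.1 x
    RSKword xs (k + 1) (P', addBox PQ.2 P' k)

/-- The one-line notation (with values `1, …, n`) of a permutation of `Fin n`. -/
def oneLine (n : ℕ) (v : Perm (Fin n)) : List ℕ :=
  (List.finRange n).map (fun i => (v i : ℕ) + 1)

/-- The RSK correspondence `v ↝ (P, Q)` for permutations. -/
def RSKmap (n : ℕ) (v : Perm (Fin n)) : List (List ℕ) × List (List ℕ) :=
  RSKword (oneLine n v) 1 ([], [])

/-! ### Coxeter length, Bruhat order, Kazhdan–Lusztig polynomials for `S_n` -/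

/-- `s` is a simple transposition `(j, j+1)`. -/
def IsSimpleT {n : ℕ} (s : Perm (Fin n)) : Prop :=
  ∃ j : ℕ, ∃ h : j + 1 < n, s = Equiv.swap ⟨j, Nat.lt_of_succ_lt h⟩ ⟨j + 1, h⟩

/-- The Coxeter length of a permutation: the minimal length of a word in the
simple transpositions expressing it. -/
noncomputable def len {n : ℕ} (w : Perm (Fin n)) : ℕ :=
  sInf {k | ∃ L : List (Perm (Fin n)), L.length = k ∧ (∀ s ∈ L, IsSimpleT s) ∧ L.prod = w}

/-- One step in the Bruhat order: multiply by a transposition, increasing the length. -/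
def BruhatStep {n : ℕ} (x y : Perm (Fin n)) : Prop :=
  (∃ i j : Fin n, i ≠ j ∧ y = x * Equiv.swap i j) ∧ len x < len y

/-- The Bruhat order on `S_n`. -/
def BruhatLe {n : ℕ} : Perm (Fin n) → Perm (Fin n) → Prop :=
  Relation.ReflTransGen BruhatStep

/-- The strict Bruhat order on `S_n`. -/
def BruhatLt {n : ℕ} (x y : Perm (Fin n)) : Prop := BruhatLe x y ∧ x ≠ y

theorem bruhatLe_len_le {n : ℕ} {x y : Perm (Fin n)} (h : BruhatLe x y) : len x ≤ len y := by
  induction h with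
  | refl => exact le_rfl
  | tail _ h2 ih => exact ih.trans h2.2.le

theorem bruhatLt_len_lt {n : ℕ} {x y : Perm (Fin n)} (h : BruhatLt x y) : len x < len y := by
  rcases Relation.ReflTransGen.cases_head h.1 with rfl | ⟨c, hc, hcy⟩
  · exact absurd rfl h.2
  · exact lt_of_lt_of_le hc.2 (bruhatLe_len_le hcy)

open Classical in
/-- A choice of simple transposition `s` with `len (s * w) < len w`, if one exists. -/
noncomputable def descChoice {n : ℕ} (w : Perm (Fin n)) : Option (Perm (Fin n)) :=
  if h : ∃ s : Perm (Fin n), IsSimpleT s ∧ len (s * w) < len w then some h.choose else none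

theorem descChoice_spec {n : ℕ} {w s : Perm (Fin n)} (h : descChoice w = some s) :
    len (s * w) < len w := by
  unfold descChoice at h
  split at h
  · rename_i hex
    obtain rfl : hex.choose = s := Option.some.inj h
    exact hex.choose_spec.2
  · exact absurd h (by simp)

open Classical in
/-- The Kazhdan–Lusztig polynomials `P_{v,w}` of the symmetric group, defined through the
standard recursion: `P_{w,w} = 1`, `P_{v,w} = 0` unless `v ≤ w` in Bruhat order, and for a
simple reflection `s` with `sw < w`,
`P_{v,w} = q^{1-c} P_{sv,sw} + q^c P_{v,sw} - ∑_{v ≤ z < sw, sz < z} μ(z,sw) q^{(ℓ(w)-ℓ(z))/2} P_{v,z}`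
where `c = 1` if `sv < v` and `c = 0` otherwise, and `μ(z,w')` is the coefficient of
`q^{(ℓ(w')-ℓ(z)-1)/2}` in `P_{z,w'}` (zero unless `ℓ(w') - ℓ(z)` is odd). -/
noncomputable def KLpoly {n : ℕ} (v w : Perm (Fin n)) : Polynomial ℤ :=
  if v = w then 1
  else if ¬ BruhatLt v w then 0
  else
    match hd : descChoice w with
    | none => 0
    | some s =>
      have hlt : len (s * w) < len w := descChoice_spec hd
      Polynomial.X ^ (if len (s * v) < len v then 0 else 1) * KLpoly (s * v) (s * w)
      + Polynomial.X ^ (if len (s * v) < len v then 1 else 0) * KLpoly v (s * w)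
      - ∑ z ∈ (Finset.univ.filter (fun z : Perm (Fin n) =>
            BruhatLe v z ∧ BruhatLt z (s * w) ∧ len (s * z) < len z ∧
              (len (s * w) - len z) % 2 = 1)).attach,
          Polynomial.C ((KLpoly z.1 (s * w)).coeff ((len (s * w) - len z.1 - 1) / 2))
            * Polynomial.X ^ ((len w - len z.1) / 2) * KLpoly v z.1
termination_by len w
decreasing_by
  · exact hlt
  · exact hlt
  · exact hlt
  · have hz := z.2
    simp only [Finset.mem_filter] at hz
    exact lt_trans (bruhatLt_len_lt hz.2.2.1) hlt

open Classical in
/-- The Kazhdan–Lusztig `μ`-coefficient for a pair of permutations: the coefficient of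
`q^{(ℓ(w)-ℓ(v)-1)/2}` in `P_{v,w}` for `v < w`, extended symmetrically, and `0` if `v` and
`w` are Bruhat-incomparable (or `ℓ(w) - ℓ(v)` is even). -/
noncomputable def muBarP {n : ℕ} (v w : Perm (Fin n)) : ℤ :=
  if BruhatLt v w ∧ (len w - len v) % 2 = 1 then
    (KLpoly v w).coeff ((len w - len v - 1) / 2)
  else if BruhatLt w v ∧ (len v - len w) % 2 = 1 then
    (KLpoly w v).coeff ((len v - len w - 1) / 2)
  else 0

/-! ### The row-superstandard recording tableau and `μ̄` for tableaux -/

/-- Auxiliary: fill rows consecutively starting from `start`. -/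
def rowStdAux : List ℕ → ℕ → List (List ℕ)
  | [], _ => []
  | a :: rest, start => ((List.range a).map (start + ·)) :: rowStdAux rest (start + a)

/-- The row-superstandard tableau of a given shape: `1, 2, …` filled row by row. -/
def rowStd (lam : List ℕ) : List (List ℕ) := rowStdAux lam 1

open Classical in
/-- The Kazhdan–Lusztig `μ̄`-coefficient for a pair of standard Young tableaux of the same
shape with `n` boxes: `μ̄(T,R) = μ̄(v,w)` where `v ↝ (T,Q)`, `w ↝ (R,Q)` under RSK for a
fixed recording tableau `Q` of that shape. -/
noncomputable def muBarTab (n : ℕ) (T R : List (List ℕ)) : ℤ :=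
  if hT : ∃ v : Perm (Fin n), RSKmap n v = (T, rowStd (T.map List.length)) then
    if hR : ∃ w : Perm (Fin n), RSKmap n w = (R, rowStd (T.map List.length)) then
      muBarP hT.choose hR.choose
    else 0
  else 0

/-! ### The Specht module with its Kazhdan–Lusztig basis -/

/-- The Kazhdan–Lusztig basis vector `C_T` of the Specht module, realised inside the space of
complex-valued functions on the standard Young tableaux of shape `lam`. -/
def KLvec {lam : List ℕ} (T : {T : List (List ℕ) // IsSYT lam T}) :
    {T : List (List ℕ) // IsSYT lam T} → ℂ :=
  fun R => if R = T then 1 else 0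

open Classical in
/-- `ρ` is an action of `S_n` on the span of the tableaux of shape `lam` realising the
Kazhdan–Lusztig basis action on the Specht module `S^lam`:
`s_j · C_T = -C_T` if `j ∈ D(T)`, and
`s_j · C_T = C_T + ∑_{R, j ∈ D(R)} μ̄(T,R) C_R` otherwise. -/
def KLActionHyp (n : ℕ) (lam : List ℕ)
    (ρ : Representation ℂ (Perm (Fin n)) ({T : List (List ℕ) // IsSYT lam T} → ℂ)) : Prop :=
  ∀ (j : ℕ) (h1 : 1 ≤ j) (h2 : j < n) (T : {T : List (List ℕ) // IsSYT lam T}),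
    ρ (Equiv.swap ⟨j - 1, by omega⟩ ⟨j, h2⟩) (KLvec T) =
      if Descent T.1 j then -KLvec T
      else KLvec T + fun R => if Descent R.1 j then ((muBarTab n T.1 R.1 : ℤ) : ℂ) else 0

open Classical in
/-- Promotion as a map on the standard Young tableaux of shape `lam`. -/
noncomputable def prT {lam : List ℕ} (T : {T : List (List ℕ) // IsSYT lam T}) :
    {T : List (List ℕ) // IsSYT lam T} :=
  if h : IsSYT lam (promote T.1) then ⟨promote T.1, h⟩ else T

open Classical in
/-- Partial evacuation `ev_k` as a map on the standard Young tableaux of shape `lam`. -/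
noncomputable def evT {lam : List ℕ} (k : ℕ) (T : {T : List (List ℕ) // IsSYT lam T}) :
    {T : List (List ℕ) // IsSYT lam T} :=
  if h : IsSYT lam (evacOn T.1 k) then ⟨evacOn T.1 k, h⟩ else T

/-! ### Distinguished permutations -/

/-- The permutation of `Fin n` reversing the first `k` elements `0, …, k-1` (i.e. reversing
the values `1, …, k` in one-line notation) and fixing the rest. -/
def revFirst (n k : ℕ) (hk : k ≤ n) : Perm (Fin n) :=
  Function.Involutive.toPerm
    (fun i => if h : (i : ℕ) < k then ⟨k - 1 - (i : ℕ), by omega⟩ else i)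
    (by
      intro i
      by_cases h : (i : ℕ) < k
      · have h2 : k - 1 - (i : ℕ) < k := by omega
        simp only [h, dif_pos, h2]
        apply Fin.ext
        simp only []
        omega
      · simp [h])

/-- The embedding `S_{n-1} → S_n` (as the permutations fixing the last point). -/
noncomputable def permIncl (n : ℕ) : Perm (Fin (n - 1)) →* Perm (Fin n) :=
  Equiv.Perm.viaEmbeddingHom (Fin.castLEEmb (Nat.sub_le n 1))

/-! ### Parabolic subgroups, descending and separable permutations -/

/-- The simple transposition `s_{j+1} = (j, j+1)` (0-based `j`). -/
def simpleOf (n j : ℕ) : Perm (Fin n) :=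
  if h : j + 1 < n then Equiv.swap ⟨j, by omega⟩ ⟨j + 1, h⟩ else 1

/-- The parabolic (standard Young) subgroup of `S_n` generated by the simple transpositions
`s_{j+1}` for `j ∈ J` (0-based). -/
def parab (n : ℕ) (J : Finset ℕ) : Subgroup (Perm (Fin n)) :=
  Subgroup.closure {s | ∃ j ∈ J, s = simpleOf n j}

/-- `u` is the longest element of the parabolic subgroup `S_J`. -/
noncomputable def IsLongestOf (n : ℕ) (J : Finset ℕ) (u : Perm (Fin n)) : Prop :=
  u ∈ parab n J ∧ ∀ v ∈ parab n J, len v ≤ len u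

/-- A permutation is descending if it is of the form `w_{J_k} ⋯ w_{J_1}` for an increasing
chain `J_1 ⊂ ⋯ ⊂ J_k` of non-empty subsets of the simple transpositions, where `w_J` is the
longest element of the parabolic subgroup `S_J`. -/
noncomputable def Descending (n : ℕ) (w : Perm (Fin n)) : Prop :=
  ∃ (k : ℕ) (Js : Fin k → Finset ℕ) (ws : Fin k → Perm (Fin n)),
    (∀ i, (Js i).Nonempty ∧ Js i ⊆ Finset.range (n - 1)) ∧
    (∀ i j : Fin k, i < j → Js i ⊂ Js j) ∧
    (∀ i, IsLongestOf n (Js i) (ws i)) ∧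
    w = (List.ofFn ws).reverse.prod

/-- A permutation is separable if it avoids the patterns `2413` and `3142`. -/
def Separable (n : ℕ) (w : Perm (Fin n)) : Prop :=
  ¬ ∃ i1 i2 i3 i4 : Fin n, i1 < i2 ∧ i2 < i3 ∧ i3 < i4 ∧
    ((w i3 < w i1 ∧ w i1 < w i4 ∧ w i4 < w i2) ∨
     (w i2 < w i4 ∧ w i4 < w i1 ∧ w i1 < w i3))

/-! ### Column-superstandard tableaux -/

/-- The number of boxes in column `c` of the shape `lam`. -/
def colHeight (lam : List ℕ) (c : ℕ) : ℕ := (lam.filter (fun x => decide (c < x))).length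

/-- The column-superstandard tableau `CSS(lam)`: the values `1, …, n` are placed column by
column, left to right, each column top to bottom. -/
def colStd (lam : List ℕ) : List (List ℕ) :=
  (List.range lam.length).map (fun i =>
    (List.range (lam.getD i 0)).map (fun j =>
      ((List.range j).map (colHeight lam)).sum + i + 1))

/-- The column reading word of a tableau: columns left to right, each read bottom to top. -/
def colReading (T : List (List ℕ)) : List ℕ :=
  ((List.range (T.getD 0 []).length).map (fun j =>
    (((List.range T.length).filter (fun i => decide (j < (T.getD i []).length))).reverse).map
      (fun i => entryAt T i j))).flatten

/-- The tableau `CSS_i(lam)`: `n` is placed in the `i`-th removable box (in row `k`,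
1-based); the values `n-1, …, n-k+1` are placed at the ends of rows `k-1, …, 1`; the
remaining values `1, …, n-k` are placed in the remaining boxes column by column. -/
def cssI (lam : List ℕ) (i : ℕ) : List (List ℕ) :=
  let n := lam.sum
  let row0 := (removableRows lam).getD (i - 1) 0
  let lam' := (List.range lam.length).map
    (fun t => if t ≤ row0 then lam.getD t 0 - 1 else lam.getD t 0)
  let base := colStd lam'
  (List.range lam.length).map (fun t =>
    if t ≤ row0 then (base.getD t []) ++ [n - (row0 - t)] else base.getD t [])

/-! ## Auxiliary development for `rsk_column_superstandard` -/

def off (lam : List ℕ) (j : ℕ) : ℕ := ((List.range j).map (colHeight lam)).sum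

def trunc (P : List (List ℕ)) (lam : List ℕ) (j r : ℕ) : List (List ℕ) :=
  (List.range (if j = 0 then r else P.length)).map (fun t =>
    (P.getD t []).take j ++
      (if t < r then [entryAt P (colHeight lam j - (r - t)) j] else []))

def qtrunc (P : List (List ℕ)) (lam : List ℕ) (j r : ℕ) : List (List ℕ) :=
  (List.range (if j = 0 then r else P.length)).map (fun t =>
    (List.range (min j (P.getD t []).length)).map (fun c => off lam c + t + 1) ++
      (if t < r then [off lam j + t + 1] else []))



/-! ### list helpers -/

lemma getD_map_range {α : Type*} {f : ℕ → α} {t N : ℕ} (h : t < N) (d : α) :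
    ((List.range N).map f).getD t d = f t := by
  rw [List.getD_eq_getElem _ _ (by simpa using h)]
  simp

lemma getD_map_range_ge {α : Type*} {f : ℕ → α} {t N : ℕ} (h : N ≤ t) (d : α) :
    ((List.range N).map f).getD t d = d := by
  apply List.getD_eq_default
  simpa using h

lemma set_map_range {α : Type*} {f : ℕ → α} {N r : ℕ} (v : α) :
    ((List.range N).map f).set r v = (List.range N).map (fun t => if t = r then v else f t) := by
  apply List.ext_getElem (by simp)
  intro i h1 h2
  simp only [List.getElem_set, List.getElem_map, List.getElem_range]
  by_cases h : i = r <;> simp [h]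
  exact fun he => absurd he.symm h

lemma set_getD_self {α : Type*} {l : List α} {r : ℕ} (h : r < l.length) (d : α) :
    l.set r (l.getD r d) = l := by
  apply List.ext_getElem (by simp)
  intro i h1 h2
  rw [List.getElem_set]
  split
  · next he => subst he; exact (List.getD_eq_getElem l d h).symm ▸ rfl
  · rfl

lemma len_getD (A : List (List ℕ)) (t : ℕ) :
    (A.getD t []).length = (A.map List.length).getD t 0 := by
  by_cases ht : t < A.length
  · rw [List.getD_eq_getElem _ _ ht, List.getD_eq_getElem _ _ (by simpa using ht)]
    simp
  · rw [List.getD_eq_default _ _ (by omega), List.getD_eq_default _ _ (by simp; omega)]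
    rfl

lemma shape_getD_len {A B : List (List ℕ)} (h : A.map List.length = B.map List.length) (t : ℕ) :
    (A.getD t []).length = (B.getD t []).length := by
  rw [len_getD, len_getD, h]

lemma find?_range'_eq_some {q : ℕ → Bool} {r : ℕ} :
    ∀ (n s : ℕ), s ≤ r → r < s + n → q r = true → (∀ i, s ≤ i → i < r → q i = false) →
    (List.range' s n).find? q = some r := by
  intro n
  induction n with
  | zero => intro s h1 h2; exact absurd h2 (by omega)
  | succ n ih =>
    intro s h1 h2 hq hmin
    rw [List.range'_succ]
    rcases eq_or_lt_of_le h1 with rfl | hlt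
    · simp [List.find?_cons, hq]
    · rw [List.find?_cons, hmin s le_rfl hlt]
      exact ih (s+1) hlt (by omega) hq (fun i hi1 hi2 => hmin i (by omega) hi2)

lemma find?_range_eq_some {q : ℕ → Bool} {r n : ℕ} (h2 : r < n) (hq : q r = true)
    (hmin : ∀ i, i < r → q i = false) : (List.range n).find? q = some r := by
  rw [List.range_eq_range']
  exact find?_range'_eq_some n 0 (Nat.zero_le _) (by omega) hq (fun i _ hi => hmin i hi)

lemma countP_range_getD {α : Type*} (l : List α) (d : α) (p : α → Bool) :
    (List.range l.length).countP (fun i => p (l.getD i d)) = l.countP p := by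
  induction l with
  | nil => simp
  | cons a as ih =>
    rw [List.length_cons, List.range_succ_eq_map, List.countP_cons, List.countP_map]
    simp only [List.getD_cons_zero, List.getD_cons_succ, Function.comp_def]
    rw [ih, List.countP_cons]
    try omega

lemma filter_range_eq_range {q : ℕ → Bool} :
    ∀ n, (∀ i j, i ≤ j → j < n → q j = true → q i = true) →
    (List.range n).filter q = List.range ((List.range n).countP q) := by
  intro n
  induction n with
  | zero => simp
  | succ n ih =>
    intro hmono
    rw [List.range_succ, List.filter_append, List.countP_append]
    by_cases hq : q n = true
    · have hall : ∀ x ∈ List.range n, q x = true := by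
        intro x hx; exact hmono x n (by simp at hx; omega) (by omega) hq
      rw [List.filter_eq_self.mpr hall, List.countP_eq_length.mpr hall]
      simp [hq, List.range_succ]
    · simp only [Bool.not_eq_true] at hq
      rw [ih (fun i j h1 h2 h3 => hmono i j h1 (by omega) h3)]
      simp [hq]

lemma mem_take_getD {l : List ℕ} {j : ℕ} {e : ℕ} (h : e ∈ l.take j) :
    ∃ c, c < j ∧ c < l.length ∧ l.getD c 0 = e := by
  rw [List.mem_iff_getElem] at h
  obtain ⟨c, hc, he⟩ := h
  simp only [List.length_take, lt_min_iff] at hc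
  refine ⟨c, hc.1, hc.2, ?_⟩
  rw [List.getD_eq_getElem _ _ hc.2, ← he, List.getElem_take]

/-! ### insertRow lemmas -/

lemma insertRow_no_bump {l : List ℕ} {x : ℕ} (h : ∀ e ∈ l, ¬ x < e) :
    insertRow l x = (l ++ [x], none) := by
  induction l with
  | nil => simp [insertRow]
  | cons a as ih =>
    rw [insertRow, if_neg (h a (by simp))]
    rw [ih (fun e he => h e (by simp [he]))]
    simp

lemma insertRow_append_last {l : List ℕ} {x c : ℕ} (h : ∀ e ∈ l, ¬ x < e) (hc : x < c) :
    insertRow (l ++ [c]) x = (l ++ [x], some c) := by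
  induction l with
  | nil => simp [insertRow, hc]
  | cons a as ih =>
    rw [List.cons_append, insertRow, if_neg (h a (by simp))]
    simp only [ih (fun e he => h e (by simp [he]))]
    simp

lemma insertRow_none_spec {l R : List ℕ} {x : ℕ} (h : insertRow l x = (R, none)) :
    R = l ++ [x] ∧ ∀ e ∈ l, ¬ x < e := by
  induction l generalizing R with
  | nil => simp only [insertRow, Prod.mk.injEq] at h; simp [h.1.symm]
  | cons a as ih =>
    by_cases hxa : x < a
    · rw [insertRow, if_pos hxa] at h; simp at h
    · rw [insertRow, if_neg hxa] at h
      rcases hp : insertRow as x with ⟨R1, o⟩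
      rw [hp] at h
      simp only [Prod.mk.injEq] at h
      obtain ⟨h1, h2⟩ := h
      subst h2
      obtain ⟨h3, h4⟩ := ih hp
      subst h3; subst h1
      exact ⟨rfl, by intro e he; rcases List.mem_cons.mp he with rfl | he; exact hxa; exact h4 e he⟩

lemma insertRow_some_spec {l R : List ℕ} {x y : ℕ} (h : insertRow l x = (R, some y)) :
    ∃ p, p < l.length ∧ l.getD p 0 = y ∧ R = l.set p x ∧
      (∀ q, q < p → ¬ x < l.getD q 0) ∧ x < y := by
  induction l generalizing R with
  | nil => simp [insertRow] at h
  | cons a as ih =>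
    by_cases hxa : x < a
    · rw [insertRow, if_pos hxa] at h
      simp only [Prod.mk.injEq, Option.some.injEq] at h
      obtain ⟨h1, h2⟩ := h
      exact ⟨0, by simp, by simp [h2], by simp [h1.symm], by omega, h2 ▸ hxa⟩
    · rw [insertRow, if_neg hxa] at h
      rcases hp : insertRow as x with ⟨R1, o⟩
      rw [hp] at h
      simp only [Prod.mk.injEq] at h
      obtain ⟨h1, h2⟩ := h
      subst h2
      obtain ⟨p, hp1, hp2, hp3, hp4, hp5⟩ := ih hp
      refine ⟨p + 1, by simpa using hp1, by simpa using hp2, by simp [h1.symm, hp3], ?_, hp5⟩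
      intro q hq
      cases q with
      | zero => simpa using hxa
      | succ q => simpa using hp4 q (by omega)

lemma insertRow_fst_mem {l : List ℕ} {x e : ℕ} (h : e ∈ (insertRow l x).1) :
    e = x ∨ e ∈ l := by
  induction l with
  | nil => simp [insertRow] at h; tauto
  | cons a as ih =>
    by_cases hxa : x < a
    · rw [insertRow, if_pos hxa] at h
      rcases List.mem_cons.mp h with rfl | h; tauto; right; exact List.mem_cons_of_mem _ h
    · rw [insertRow, if_neg hxa] at h
      simp only at h
      rcases List.mem_cons.mp h with rfl | h
      · right; simp
      · rcases ih h with rfl | h; tauto; right; exact List.mem_cons_of_mem _ h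

lemma insertRow_sorted {l : List ℕ} {x : ℕ} (hs : l.Pairwise (· < ·)) (hx : x ∉ l) :
    (insertRow l x).1.Pairwise (· < ·) := by
  induction l with
  | nil => simp [insertRow]
  | cons a as ih =>
    rw [List.pairwise_cons] at hs
    by_cases hxa : x < a
    · rw [insertRow, if_pos hxa]
      exact List.pairwise_cons.mpr ⟨fun e he => lt_trans hxa (hs.1 e he), hs.2⟩
    · rw [insertRow, if_neg hxa]
      simp only
      refine List.pairwise_cons.mpr ⟨?_, ih hs.2 (fun h => hx (List.mem_cons_of_mem _ h))⟩
      intro e he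
      rcases insertRow_fst_mem he with rfl | he
      · rcases lt_or_eq_of_le (not_lt.mp hxa) with h | rfl
        · exact h
        · exact absurd List.mem_cons_self hx
      · exact hs.1 e he

lemma insertRow_perm (l : List ℕ) (x : ℕ) :
    ((insertRow l x).1 ++ (insertRow l x).2.toList).Perm (x :: l) := by
  induction l with
  | nil => simp [insertRow]
  | cons a as ih =>
    by_cases hxa : x < a
    · rw [insertRow, if_pos hxa]
      simp only [Option.toList_some]
      simpa using (List.perm_append_singleton a as).cons x
    · rw [insertRow, if_neg hxa]
      simp only
      exact (ih.cons a).trans (List.Perm.swap x a as)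




/-! ### insertTab lemmas -/

lemma insertTab_flatten_perm : ∀ (T : List (List ℕ)) (x : ℕ),
    (insertTab T x).flatten.Perm (x :: T.flatten) := by
  intro T
  induction T with
  | nil => intro x; simp [insertTab]
  | cons r rs ih =>
    intro x
    rcases hp : insertRow r x with ⟨R, o⟩
    have hperm := insertRow_perm r x
    rw [hp] at hperm
    cases o with
    | none =>
      simp only [insertTab, hp]
      simp only [Option.toList_none, List.append_nil] at hperm
      simp only [List.flatten_cons]
      calc (R ++ rs.flatten).Perm ((x :: r) ++ rs.flatten) := hperm.append_right _
        _ = x :: (r ++ rs.flatten) := rfl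
    | some y =>
      simp only [insertTab, hp, List.flatten_cons]
      have h2 : (R ++ (insertTab rs y).flatten).Perm (R ++ (y :: rs.flatten)) :=
        (ih y).append_left R
      refine h2.trans ?_
      have h3 : (R ++ (y :: rs.flatten)) = (R ++ [y]) ++ rs.flatten := by simp
      rw [h3]
      simp only [Option.toList_some] at hperm
      calc ((R ++ [y]) ++ rs.flatten).Perm ((x :: r) ++ rs.flatten) := hperm.append_right _
        _ = x :: (r ++ rs.flatten) := rfl

lemma insertTab_spec : ∀ (T : List (List ℕ)) (x : ℕ),
    (x :: T.flatten).Nodup → (∀ r ∈ T, r.Pairwise (· < ·)) → (∀ r ∈ T, r ≠ []) →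
    ∃ i ≤ T.length,
      (insertTab T x).length = max T.length (i + 1) ∧
      (∀ t, ((insertTab T x).getD t []).length
          = (T.getD t []).length + (if t = i then 1 else 0)) ∧
      (∀ r ∈ insertTab T x, r.Pairwise (· < ·)) ∧
      (∀ r ∈ insertTab T x, r ≠ []) := by
  intro T
  induction T with
  | nil =>
    intro x _ _ _
    refine ⟨0, by simp, by simp [insertTab], ?_, by simp [insertTab], by simp [insertTab]⟩
    intro t
    cases t with
    | zero => simp [insertTab]
    | succ t => simp [insertTab]
  | cons r rs ih =>
    intro x hnd hs hne
    have hxr : x ∉ r := by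
      intro h
      have : x ∈ (r :: rs).flatten := by simp [h]
      exact (List.nodup_cons.mp hnd).1 this
    rcases hp : insertRow r x with ⟨R, o⟩
    cases o with
    | none =>
      obtain ⟨hR, _⟩ := insertRow_none_spec hp
      refine ⟨0, by simp, ?_, ?_, ?_, ?_⟩
      · simp only [insertTab, hp]; simp
      · intro t
        cases t with
        | zero => simp [insertTab, hp, hR]
        | succ t => simp [insertTab, hp]
      · intro r' hr'
        simp only [insertTab, hp] at hr'
        rcases List.mem_cons.mp hr' with rfl | h
        · have := insertRow_sorted (hs r (by simp)) hxr
          rwa [hp] at this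
        · exact hs r' (List.mem_cons_of_mem _ h)
      · intro r' hr'
        simp only [insertTab, hp] at hr'
        rcases List.mem_cons.mp hr' with rfl | h
        · simp [hR]
        · exact hne r' (List.mem_cons_of_mem _ h)
    | some y =>
      obtain ⟨p, hp1, hp2, hp3, _, _⟩ := insertRow_some_spec hp
      have hyr : y ∈ r := by
        rw [List.getD_eq_getElem _ _ hp1] at hp2
        exact hp2 ▸ List.getElem_mem _
      have hnd' : (y :: rs.flatten).Nodup := by
        have h1 : (x :: (r :: rs).flatten).Nodup := hnd
        simp only [List.flatten_cons] at h1
        have h2 := (List.nodup_cons.mp h1).2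
        have h3 := (List.nodup_append.mp h2)
        exact List.nodup_cons.mpr ⟨fun hy => h3.2.2 _ hyr _ hy rfl, h3.2.1⟩
      obtain ⟨i, hi, hlen, hrow, hsort, hnemp⟩ :=
        ih y hnd' (fun r' h => hs r' (by simp [h])) (fun r' h => hne r' (by simp [h]))
      refine ⟨i + 1, by simpa using hi, ?_, ?_, ?_, ?_⟩
      · simp only [insertTab, hp]
        rw [List.length_cons, hlen, List.length_cons, Nat.succ_max_succ]
      · intro t
        cases t with
        | zero =>
          simp only [insertTab, hp]
          simp [hp3, hp1]
          try omega
        | succ t =>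
          simp only [insertTab, hp]
          simpa using hrow t
      · intro r' hr'
        simp only [insertTab, hp] at hr'
        rcases List.mem_cons.mp hr' with rfl | h
        · have := insertRow_sorted (hs r (by simp)) hxr
          rwa [hp] at this
        · exact hsort r' h
      · intro r' hr'
        simp only [insertTab, hp] at hr'
        rcases List.mem_cons.mp hr' with rfl | h
        · intro h0
          have hl := congrArg List.length (hp3.symm.trans h0)
          simp only [List.length_set, List.length_nil] at hl
          omega
        · exact hnemp r' h

lemma insertRow_some_inj {r r' R : List ℕ} {x x' y : ℕ}
    (hsr : r.Pairwise (· < ·)) (hsr' : r'.Pairwise (· < ·)) (hlen : r.length = r'.length)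
    (h : insertRow r x = (R, some y)) (h' : insertRow r' x' = (R, some y)) :
    r = r' ∧ x = x' := by
  obtain ⟨p, hp1, hp2, hp3, _, hxy⟩ := insertRow_some_spec h
  obtain ⟨p', hp1', hp2', hp3', _, hxy'⟩ := insertRow_some_spec h'
  have key : ∀ (s s' : List ℕ) (q q' z z' : ℕ), s'.Pairwise (· < ·) →
      q < s.length → q' < s'.length → s'.getD q' 0 = y →
      s.set q z = s'.set q' z' → z < y → q' < q → False := by
    intro s s' q q' z z' hsrt hq hq' hgy' hset hz hlt
    have hql : q < s'.length := by
      have := congrArg List.length hset; simp at this; omega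
    have h1 : (s.set q z).getD q 0 = z := by
      rw [List.getD_eq_getElem _ _ (by simpa using hq)]; simp [List.getElem_set]
    have h2 : (s'.set q' z').getD q 0 = s'.getD q 0 := by
      rw [List.getD_eq_getElem _ _ (by simpa using hql), List.getD_eq_getElem _ _ hql,
        List.getElem_set]
      simp [Nat.ne_of_lt hlt]
    have h3 : s'.getD q' 0 < s'.getD q 0 := by
      rw [List.getD_eq_getElem _ _ hq', List.getD_eq_getElem _ _ hql]
      exact List.pairwise_iff_getElem.mp hsrt _ _ _ _ hlt
    rw [hset, h2] at h1
    omega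
  have hpp : p = p' := by
    rcases lt_trichotomy p p' with hlt | heq | hlt
    · exact (key r' r p' p x' x hsr hp1' hp1 hp2 (hp3'.symm.trans hp3) hxy' hlt).elim
    · exact heq
    · exact (key r r' p p' x x' hsr' hp1 hp1' hp2' (hp3.symm.trans hp3') hxy hlt).elim
  subst hpp
  have hp1'' : p < r'.length := by omega
  have hset : r.set p x = r'.set p x' := hp3.symm.trans hp3'
  have hx : x = x' := by
    have h1 : (r.set p x).getD p 0 = x := by
      rw [List.getD_eq_getElem _ _ (by simpa using hp1)]; simp [List.getElem_set]
    have h2 : (r'.set p x').getD p 0 = x' := by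
      rw [List.getD_eq_getElem _ _ (by simpa using hp1'')]; simp [List.getElem_set]
    rw [hset, h2] at h1
    exact h1.symm
  subst hx
  refine ⟨?_, rfl⟩
  have e1 : (r.set p x).set p (r.getD p 0) = r := by
    rw [List.set_set]; exact set_getD_self hp1 0
  have e2 : (r'.set p x).set p (r'.getD p 0) = r' := by
    rw [List.set_set]; exact set_getD_self hp1'' 0
  rw [hp2] at e1
  rw [hp2'] at e2
  rw [← e1, ← e2, hset]

lemma insertTab_inj : ∀ (T T' : List (List ℕ)) (x x' : ℕ),
    (∀ r ∈ T, r.Pairwise (· < ·)) → (∀ r ∈ T', r.Pairwise (· < ·)) →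
    T.map List.length = T'.map List.length →
    insertTab T x = insertTab T' x' → T = T' ∧ x = x' := by
  intro T
  induction T with
  | nil =>
    intro T' x x' _ _ hshape heq
    have : T' = [] := by simpa using hshape.symm
    subst this
    simp only [insertTab] at heq
    simp at heq
    exact ⟨rfl, heq⟩
  | cons r rs ih =>
    intro T' x x' hs hs' hshape heq
    rcases T' with _ | ⟨r', rs'⟩
    · simp at hshape
    simp only [List.map_cons, List.cons.injEq] at hshape
    obtain ⟨hrlen, hshape'⟩ := hshape
    rcases hp : insertRow r x with ⟨R, o⟩
    rcases hp' : insertRow r' x' with ⟨R', o'⟩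
    simp only [insertTab, hp, hp'] at heq
    cases o with
    | none =>
      obtain ⟨hR, _⟩ := insertRow_none_spec hp
      cases o' with
      | none =>
        obtain ⟨hR', _⟩ := insertRow_none_spec hp'
        simp only [List.cons.injEq] at heq
        obtain ⟨h1, h2⟩ := heq
        rw [hR, hR'] at h1
        have := List.append_inj' h1 (by simp)
        simp only [List.cons.injEq] at this
        exact ⟨by rw [this.1, h2], this.2.1⟩
      | some y' =>
        simp only [List.cons.injEq] at heq
        obtain ⟨h1, _⟩ := heq
        obtain ⟨q, hq1, _, hq3, _, _⟩ := insertRow_some_spec hp'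
        have l1 := congrArg List.length h1
        rw [hR, hq3] at l1
        simp at l1
        omega
    | some y =>
      cases o' with
      | none =>
        obtain ⟨hR', _⟩ := insertRow_none_spec hp'
        simp only [List.cons.injEq] at heq
        obtain ⟨h1, _⟩ := heq
        obtain ⟨q, hq1, _, hq3, _, _⟩ := insertRow_some_spec hp
        have l1 := congrArg List.length h1
        rw [hR', hq3] at l1
        simp at l1
        omega
      | some y' =>
        simp only [List.cons.injEq] at heq
        obtain ⟨h1, h2⟩ := heq
        obtain ⟨hrs, hy⟩ := ih rs' y y' (fun a ha => hs a (by simp [ha]))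
          (fun a ha => hs' a (by simp [ha])) hshape' h2
        subst hy
        subst h1
        obtain ⟨hr, hx⟩ := insertRow_some_inj (hs r (by simp)) (hs' r' (by simp)) hrlen hp hp'
        exact ⟨by rw [hr, hrs], hx⟩




lemma getD_set_ne {α : Type*} {l : List α} {i t : ℕ} (h : i ≠ t) (v : α) (d : α) :
    (l.set i v).getD t d = l.getD t d := by
  by_cases ht : t < l.length
  · rw [List.getD_eq_getElem _ _ (by simpa using ht), List.getD_eq_getElem _ _ ht,
      List.getElem_set, if_neg h]
  · rw [List.getD_eq_default _ _ (by simp; omega), List.getD_eq_default _ _ (by omega)]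

lemma getD_set_eq {α : Type*} {l : List α} {i : ℕ} (h : i < l.length) (v : α) (d : α) :
    (l.set i v).getD i d = v := by
  rw [List.getD_eq_getElem _ _ (by simpa using h)]
  simp [List.getElem_set]

lemma getD_append_left {α : Type*} {l l' : List α} {t : ℕ} (h : t < l.length) (d : α) :
    (l ++ l').getD t d = l.getD t d := by
  rw [List.getD_eq_getElem _ _ (by simp; omega), List.getD_eq_getElem _ _ h,
    List.getElem_append_left h]

lemma getD_append_right_self {α : Type*} {l : List α} {v : α} (d : α) :
    (l ++ [v]).getD l.length d = v := by
  rw [List.getD_eq_getElem _ _ (by simp)]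
  simp

lemma map_len_ext {A B : List (List ℕ)} (h1 : A.length = B.length)
    (h2 : ∀ t, (A.getD t []).length = (B.getD t []).length) :
    A.map List.length = B.map List.length := by
  apply List.ext_getElem (by simp [h1])
  intro t ht1 ht2
  simp only [List.getElem_map]
  have := h2 t
  rwa [List.getD_eq_getElem _ _ (by simpa using ht1),
    List.getD_eq_getElem _ _ (by simp at ht1 ht2 ⊢; omega)] at this

section AddBox

variable {T Q : List (List ℕ)} {x k i : ℕ}

lemma addBox_spec
    (hi : i ≤ T.length)
    (hlen : (insertTab T x).length = max T.length (i + 1))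
    (hrow : ∀ t, ((insertTab T x).getD t []).length
        = (T.getD t []).length + (if t = i then 1 else 0))
    (hQT : Q.map List.length = T.map List.length) :
    addBox Q (insertTab T x) k =
      if i < Q.length then Q.set i ((Q.getD i []) ++ [k]) else Q ++ [[k]] := by
  have hfind : (List.range (insertTab T x).length).find?
      (fun t => decide ((Q.getD t []).length < ((insertTab T x).getD t []).length)) = some i := by
    apply find?_range_eq_some
    · rw [hlen]; omega
    · simp only [hrow i, shape_getD_len hQT i, if_pos rfl]
      simp
    · intro t ht
      simp only [hrow t, shape_getD_len hQT t, if_neg (Nat.ne_of_lt ht)]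
      simp
  rw [addBox, hfind]

lemma addBox_form_shape
    (hi : i ≤ T.length)
    (hlen : (insertTab T x).length = max T.length (i + 1))
    (hrow : ∀ t, ((insertTab T x).getD t []).length
        = (T.getD t []).length + (if t = i then 1 else 0))
    (hQT : Q.map List.length = T.map List.length) :
    (if i < Q.length then Q.set i ((Q.getD i []) ++ [k]) else Q ++ [[k]]).map List.length
      = (insertTab T x).map List.length := by
  have hQl : Q.length = T.length := by
    have := congrArg List.length hQT; simpa using this
  by_cases hiq : i < Q.length
  · rw [if_pos hiq]
    apply map_len_ext
    · rw [hlen, Nat.max_eq_left (by omega)]; simp [hQl]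
    · intro t
      by_cases ht : t = i
      · subst ht
        rw [getD_set_eq hiq, hrow t, if_pos rfl, List.length_append, shape_getD_len hQT t]
        simp
      · rw [getD_set_ne (fun h => ht h.symm), hrow t, if_neg ht, shape_getD_len hQT t]
        omega
  · rw [if_neg hiq]
    have hieq : i = T.length := by omega
    apply map_len_ext
    · rw [hlen, Nat.max_eq_right (by omega)]; simp [hQl]; omega
    · intro t
      rcases lt_trichotomy t Q.length with ht | ht | ht
      · rw [getD_append_left ht, hrow t, if_neg (by omega), shape_getD_len hQT t]
        omega
      · subst ht
        rw [getD_append_right_self, hrow Q.length, if_pos (by omega)]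
        rw [List.getD_eq_default _ _ (by omega)]
        simp
      · rw [List.getD_eq_default _ _ (by simp; omega), hrow t, if_neg (by omega),
          List.getD_eq_default _ _ (by omega)]
        simp

lemma addBox_form_nonempty (hne : ∀ r ∈ Q, r ≠ []) :
    ∀ r ∈ (if i < Q.length then Q.set i ((Q.getD i []) ++ [k]) else Q ++ [[k]]), r ≠ [] := by
  by_cases hiq : i < Q.length
  · rw [if_pos hiq]
    intro r hr
    rcases List.mem_or_eq_of_mem_set hr with h | h
    · exact hne r h
    · subst h; simp
  · rw [if_neg hiq]
    intro r hr
    rcases List.mem_append.mp hr with h | h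
    · exact hne r h
    · simp at h; subst h; simp

lemma addBox_form_entries (hb : ∀ e ∈ Q.flatten, e < k) :
    ∀ e ∈ (if i < Q.length then Q.set i ((Q.getD i []) ++ [k]) else Q ++ [[k]]).flatten,
      e < k + 1 := by
  by_cases hiq : i < Q.length
  · rw [if_pos hiq]
    intro e he
    obtain ⟨r, hr, her⟩ := List.mem_flatten.mp he
    rcases List.mem_or_eq_of_mem_set hr with h | h
    · exact lt_trans (hb e (List.mem_flatten.mpr ⟨r, h, her⟩)) (by omega)
    · subst h
      rcases List.mem_append.mp her with h | h
      · have : Q.getD i [] ∈ Q := by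
          rw [List.getD_eq_getElem _ _ hiq]; exact List.getElem_mem _
        exact lt_trans (hb e (List.mem_flatten.mpr ⟨_, this, h⟩)) (by omega)
      · simp at h; omega
  · rw [if_neg hiq]
    intro e he
    simp only [List.flatten_append] at he
    rcases List.mem_append.mp he with h | h
    · exact lt_trans (hb e h) (by omega)
    · simp at h; omega

lemma addBox_form_strip (hne : ∀ r ∈ Q, r ≠ []) (hb : ∀ e ∈ Q.flatten, e < k)
    (hiq : i ≤ Q.length) :
    ((if i < Q.length then Q.set i ((Q.getD i []) ++ [k]) else Q ++ [[k]]).map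
      (fun r => r.filter (fun e => decide (e < k)))).filter (fun r => !r.isEmpty) = Q := by
  have hrowfix : ∀ r ∈ Q, r.filter (fun e => decide (e < k)) = r := by
    intro r hr
    apply List.filter_eq_self.mpr
    intro e he
    simpa using hb e (List.mem_flatten.mpr ⟨r, hr, he⟩)
  have hmapQ : Q.map (fun r => r.filter (fun e => decide (e < k))) = Q := by
    have : Q.map (fun r => r.filter (fun e => decide (e < k))) = Q.map id :=
      List.map_congr_left (fun r hr => (hrowfix r hr).trans rfl)
    simpa using this
  have hfilterQ : Q.filter (fun r => !r.isEmpty) = Q := by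
    apply List.filter_eq_self.mpr
    intro r hr
    simpa [List.isEmpty_iff] using hne r hr
  by_cases hlt : i < Q.length
  · rw [if_pos hlt, List.map_set, hmapQ]
    have hmem : Q.getD i [] ∈ Q := by
      rw [List.getD_eq_getElem _ _ hlt]; exact List.getElem_mem _
    have : (Q.getD i [] ++ [k]).filter (fun e => decide (e < k)) = Q.getD i [] := by
      rw [List.filter_append, hrowfix _ hmem]
      simp
    rw [this, set_getD_self hlt, hfilterQ]
  · rw [if_neg hlt, List.map_append, hmapQ, List.filter_append, hfilterQ]
    simp

end AddBox

/-! ### RSKword lemmas -/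

lemma RSKword_cons (x : ℕ) (xs : List ℕ) (k : ℕ) (T Q : List (List ℕ)) :
    RSKword (x :: xs) k (T, Q)
      = RSKword xs (k + 1) (insertTab T x, addBox Q (insertTab T x) k) := rfl

lemma RSKword_append : ∀ (u u' : List ℕ) (k : ℕ) (PQ : List (List ℕ) × List (List ℕ)),
    RSKword (u ++ u') k PQ = RSKword u' (k + u.length) (RSKword u k PQ) := by
  intro u
  induction u with
  | nil => intro u' k PQ; simp [RSKword]
  | cons a u ih =>
    intro u' k PQ
    rw [List.cons_append]
    show RSKword (u ++ u') (k+1) _ = _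
    rw [ih]
    show RSKword u' (k + 1 + u.length) _ = RSKword u' (k + (u.length + 1)) _
    congr 1
    omega

lemma RSKword_fst_flatten_perm : ∀ (w : List ℕ) (k : ℕ) (T Q : List (List ℕ)),
    (RSKword w k (T, Q)).1.flatten.Perm (w ++ T.flatten) := by
  intro w
  induction w with
  | nil => intro k T Q; simp [RSKword]
  | cons x xs ih =>
    intro k T Q
    rw [RSKword_cons]
    refine (ih _ _ _).trans ?_
    refine ((insertTab_flatten_perm T x).append_left xs).trans ?_
    exact List.perm_middle

/-! ### Injectivity of RSK -/

lemma rsk_inj : ∀ (w w' : List ℕ) (T T' Q Q' : List (List ℕ)) (k : ℕ),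
    w.length = w'.length →
    (w ++ T.flatten).Nodup → (w' ++ T'.flatten).Nodup →
    (∀ r ∈ T, r.Pairwise (· < ·)) → (∀ r ∈ T', r.Pairwise (· < ·)) →
    (∀ r ∈ T, r ≠ []) → (∀ r ∈ T', r ≠ []) →
    (∀ r ∈ Q, r ≠ []) → (∀ r ∈ Q', r ≠ []) →
    Q.map List.length = T.map List.length →
    Q'.map List.length = T'.map List.length →
    (∀ e ∈ Q.flatten, e < k) → (∀ e ∈ Q'.flatten, e < k) →
    RSKword w k (T, Q) = RSKword w' k (T', Q') →
    w = w' ∧ T = T' ∧ Q = Q' := by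
  intro w
  induction w with
  | nil =>
    intro w' T T' Q Q' k hlen _ _ _ _ _ _ _ _ _ _ _ _ heq
    have hw' : w' = [] := List.length_eq_zero_iff.mp hlen.symm
    subst hw'
    simp only [RSKword] at heq
    exact ⟨rfl, congrArg Prod.fst heq, congrArg Prod.snd heq⟩
  | cons x xs ih =>
    intro w' T T' Q Q' k hlen hnd hnd' hsT hsT' hneT hneT' hneQ hneQ' hQT hQT' hbQ hbQ' heq
    rcases w' with _ | ⟨x', xs'⟩
    · simp at hlen
    have hndx : (x :: T.flatten).Nodup := by
      refine List.Sublist.nodup ?_ hnd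
      exact (List.sublist_append_right xs T.flatten).cons₂ x
    have hndx' : (x' :: T'.flatten).Nodup := by
      refine List.Sublist.nodup ?_ hnd'
      exact (List.sublist_append_right xs' T'.flatten).cons₂ x'
    obtain ⟨i, hi, hLen, hRow, hsort1, hne1⟩ := insertTab_spec T x hndx hsT hneT
    obtain ⟨i', hi', hLen', hRow', hsort1', hne1'⟩ := insertTab_spec T' x' hndx' hsT' hneT'
    have hQl : Q.length = T.length := by
      have := congrArg List.length hQT; simpa using this
    have hQl' : Q'.length = T'.length := by
      have := congrArg List.length hQT'; simpa using this
    rw [RSKword_cons, RSKword_cons, addBox_spec hi hLen hRow hQT,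
      addBox_spec hi' hLen' hRow' hQT'] at heq
    set AB := if i < Q.length then Q.set i ((Q.getD i []) ++ [k]) else Q ++ [[k]] with hAB
    set AB' := if i' < Q'.length then Q'.set i' ((Q'.getD i' []) ++ [k]) else Q' ++ [[k]]
      with hAB'
    have hndIH : (xs ++ (insertTab T x).flatten).Nodup := by
      refine (List.Perm.nodup_iff ?_).mp hnd
      exact (((insertTab_flatten_perm T x).append_left xs).trans List.perm_middle).symm
    have hndIH' : (xs' ++ (insertTab T' x').flatten).Nodup := by
      refine (List.Perm.nodup_iff ?_).mp hnd'
      exact (((insertTab_flatten_perm T' x').append_left xs').trans List.perm_middle).symm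
    obtain ⟨hxs, hT1, hQ1⟩ := ih xs' (insertTab T x) (insertTab T' x') AB AB' (k + 1)
      (by simpa using hlen) hndIH hndIH' hsort1 hsort1' hne1 hne1'
      (addBox_form_nonempty hneQ) (addBox_form_nonempty hneQ')
      (addBox_form_shape hi hLen hRow hQT) (addBox_form_shape hi' hLen' hRow' hQT')
      (addBox_form_entries hbQ) (addBox_form_entries hbQ') heq
    have hQQ : Q = Q' := by
      rw [← addBox_form_strip (i := i) hneQ hbQ (by omega),
        ← addBox_form_strip (i := i') hneQ' hbQ' (by omega), ← hAB, ← hAB', hQ1]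
    have hshapeTT : T.map List.length = T'.map List.length := by
      rw [← hQT, ← hQT', hQQ]
    obtain ⟨hTT, hxx⟩ := insertTab_inj T T' x x' hsT hsT' hshapeTT hT1
    exact ⟨by rw [hxs, hxx], hTT, hQQ⟩




/-! ### generic insertion along a range of rows -/

lemma insertTab_range'_aux (row row' : ℕ → List ℕ) (x : ℕ → ℕ) (r : ℕ) :
    ∀ (m t₀ : ℕ), t₀ ≤ r → r ≤ t₀ + m →
    (∀ t, t₀ ≤ t → t < r → insertRow (row t) (x t) = (row' t, some (x (t+1)))) →
    (r < t₀ + m → insertRow (row r) (x r) = (row' r, none)) →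
    (r = t₀ + m → row' r = [x r]) →
    (∀ t, r < t → row' t = row t) →
    insertTab ((List.range' t₀ m).map row) (x t₀)
      = (List.range' t₀ (max m (r + 1 - t₀))).map row' := by
  intro m
  induction m with
  | zero =>
    intro t₀ h1 h2 _ _ hend _
    have ht : r = t₀ := by omega
    have hrow := hend (by omega)
    rw [ht] at hrow
    have hmax : max 0 (r + 1 - t₀) = 1 := by omega
    rw [hmax]
    simp [insertTab, List.range'_one, hrow]
  | succ m ih =>
    intro t₀ h1 h2 hbump hnone hend hlast
    rw [List.range'_succ, List.map_cons]
    rcases eq_or_lt_of_le h1 with rfl | hlt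
    · rw [insertTab, hnone (by omega)]
      simp only
      have hmax : max (m + 1) (t₀ + 1 - t₀) = m + 1 := by omega
      rw [hmax, List.range'_succ, List.map_cons]
      congr 1
      apply List.map_congr_left
      intro t ht
      have := List.mem_range'.mp ht
      exact (hlast t (by omega)).symm
    · rw [insertTab, hbump t₀ le_rfl hlt]
      simp only
      have e1 : r + 1 - (t₀ + 1) = r - t₀ := by omega
      rw [ih (t₀ + 1) (by omega) (by omega) (fun t ht1 ht2 => hbump t (by omega) ht2)
        (fun h => hnone (by omega)) (fun h => hend (by omega)) hlast, e1]
      have hmax : max (m + 1) (r + 1 - t₀) = (max m (r - t₀)) + 1 := by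
        rcases Nat.le_total m (r - t₀) with h | h
        · rw [Nat.max_eq_right h, Nat.max_eq_right (by omega)]; omega
        · rw [Nat.max_eq_left h, Nat.max_eq_left (by omega)]
      rw [hmax, List.range'_succ, List.map_cons]

/-! ### shape lemmas -/

lemma sorted_filter_len_iff : ∀ (l : List ℕ), l.Pairwise (· ≥ ·) →
    ∀ j t, (t < (l.filter (fun x => decide (j < x))).length ↔ j < l.getD t 0) := by
  intro l
  induction l with
  | nil => intro _ j t; simp
  | cons a as ih =>
    intro hs j t
    have has : ∀ x ∈ as, x ≤ a := fun x hx => (List.pairwise_cons.mp hs).1 x hx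
    have hs' := (List.pairwise_cons.mp hs).2
    by_cases hja : j < a
    · rw [List.filter_cons, if_pos (by simpa using hja)]
      cases t with
      | zero => simpa using hja
      | succ t =>
        simp only [List.length_cons, Nat.succ_lt_succ_iff, List.getD_cons_succ]
        exact ih hs' j t
    · have hfil : as.filter (fun x => decide (j < x)) = [] := by
        rw [List.filter_eq_nil_iff]
        intro x hx
        have := has x hx
        simp; omega
      rw [List.filter_cons, if_neg (by simpa using hja), hfil]
      simp only [List.length_nil, Nat.not_lt_zero, false_iff]
      cases t with
      | zero => simpa using hja
      | succ t =>
        simp only [List.getD_cons_succ]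
        by_cases ht : t < as.length
        · rw [List.getD_eq_getElem _ _ ht]
          have := has _ (List.getElem_mem ht)
          omega
        · rw [List.getD_eq_default _ _ (by omega)]
          omega

section SYT

variable {P : List (List ℕ)} {lam : List ℕ}

lemma len_getD_lam (hsh : P.map List.length = lam) (t : ℕ) :
    (P.getD t []).length = lam.getD t 0 := by rw [len_getD, hsh]

lemma lam_len (hsh : P.map List.length = lam) : lam.length = P.length := by
  have := congrArg List.length hsh; simpa using this.symm

lemma ht_iff (hsh : P.map List.length = lam) (hsort : lam.Pairwise (· ≥ ·)) (j t : ℕ) :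
    t < colHeight lam j ↔ j < (P.getD t []).length := by
  rw [len_getD_lam hsh]
  exact sorted_filter_len_iff lam hsort j t

lemma colHeight_le_len (hsh : P.map List.length = lam) (j : ℕ) :
    colHeight lam j ≤ P.length := by
  rw [← lam_len hsh]
  exact List.length_filter_le _ _

lemma len_anti (hsh : P.map List.length = lam) (hsort : lam.Pairwise (· ≥ ·))
    {t t' : ℕ} (h : t ≤ t') : (P.getD t' []).length ≤ (P.getD t []).length := by
  by_cases ht' : t' < P.length
  · rcases eq_or_lt_of_le h with rfl | hlt
    · exact le_rfl
    · have ht : t < P.length := by omega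
      rw [len_getD_lam hsh, len_getD_lam hsh,
        List.getD_eq_getElem _ _ (by rw [lam_len hsh]; omega),
        List.getD_eq_getElem _ _ (by rw [lam_len hsh]; omega)]
      exact List.pairwise_iff_getElem.mp hsort _ _ _ _ hlt
  · rw [List.getD_eq_default _ _ (by omega)]
    simp

lemma row_lt (hrows : ∀ r ∈ P, r.Pairwise (· < ·)) {t c c' : ℕ} (hcc : c < c')
    (hc' : c' < (P.getD t []).length) : entryAt P t c < entryAt P t c' := by
  by_cases ht : t < P.length
  · have hmem : P.getD t [] ∈ P := by
      rw [List.getD_eq_getElem _ _ ht]; exact List.getElem_mem _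
    have hsorted := hrows _ hmem
    show (P.getD t []).getD c 0 < (P.getD t []).getD c' 0
    rw [List.getD_eq_getElem _ _ (by omega), List.getD_eq_getElem _ _ hc']
    exact List.pairwise_iff_getElem.mp hsorted _ _ _ _ hcc
  · rw [List.getD_eq_default _ _ (by omega)] at hc'
    simp at hc'

lemma col_lt (hsh : P.map List.length = lam) (hsort : lam.Pairwise (· ≥ ·))
    (hcols : ∀ i j : ℕ, i + 1 < P.length → j < (P.getD (i + 1) []).length →
      entryAt P i j < entryAt P (i + 1) j)
    {t t' c : ℕ} (h : t < t') (ht' : t' < P.length) (hc : c < (P.getD t' []).length) :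
    entryAt P t c < entryAt P t' c := by
  induction t' with
  | zero => omega
  | succ u ihu =>
    rcases eq_or_lt_of_le (Nat.lt_succ_iff.mp h) with rfl | hlt
    · exact hcols t c ht' hc
    · have hu : u < P.length := by omega
      have hcu : c < (P.getD u []).length :=
        lt_of_lt_of_le hc (len_anti hsh hsort (by omega))
      exact lt_trans (ihu hlt hu hcu) (hcols u c ht' hc)

lemma cell_lt (hsh : P.map List.length = lam) (hsort : lam.Pairwise (· ≥ ·))
    (hrows : ∀ r ∈ P, r.Pairwise (· < ·))
    (hcols : ∀ i j : ℕ, i + 1 < P.length → j < (P.getD (i + 1) []).length →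
      entryAt P i j < entryAt P (i + 1) j)
    {t t' c c' : ℕ} (htt : t ≤ t') (hcc : c ≤ c') (hne : t < t' ∨ c < c')
    (ht' : t' < P.length) (hc' : c' < (P.getD t' []).length) :
    entryAt P t c < entryAt P t' c' := by
  rcases eq_or_lt_of_le hcc with rfl | hclt
  · rcases hne with h | h
    · exact col_lt hsh hsort hcols h ht' hc'
    · omega
  · rcases eq_or_lt_of_le htt with rfl | htlt
    · exact row_lt hrows hclt hc'
    · have hct : c' < (P.getD t []).length :=
        lt_of_lt_of_le hc' (len_anti hsh hsort (by omega))
      exact lt_trans (row_lt hrows hclt hct) (col_lt hsh hsort hcols htlt ht' hc')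

end SYT



/-- Row `t` of the intermediate tableau. -/
def trow (P : List (List ℕ)) (lam : List ℕ) (j r t : ℕ) : List ℕ :=
  (P.getD t []).take j ++ (if t < r then [entryAt P (colHeight lam j - (r - t)) j] else [])

/-- The value inserted at step `t` of the bumping path. -/
def tx (P : List (List ℕ)) (lam : List ℕ) (j r t : ℕ) : ℕ :=
  entryAt P (colHeight lam j - (r + 1 - t)) j

lemma trunc_eq (P : List (List ℕ)) (lam : List ℕ) (j r : ℕ) :
    trunc P lam j r = (List.range' 0 (if j = 0 then r else P.length)).map (trow P lam j r) := by
  rw [trunc, List.range_eq_range']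
  rfl

section Steps

variable {P : List (List ℕ)} {lam : List ℕ}
variable (hsh : P.map List.length = lam) (hsort : lam.Pairwise (· ≥ ·))
variable (hrows : ∀ r ∈ P, r.Pairwise (· < ·))
variable (hcols : ∀ i j : ℕ, i + 1 < P.length → j < (P.getD (i + 1) []).length →
      entryAt P i j < entryAt P (i + 1) j)
variable (hpos : ∀ x ∈ lam, 0 < x)

include hsh hsort hrows hcols in
lemma take_lt {t t' j : ℕ} (htt' : t ≤ t') (ht' : t' < colHeight lam j) :
    ∀ e ∈ (P.getD t []).take j, ¬ entryAt P t' j < e := by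
  intro e he
  obtain ⟨c, hcj, hcl, hce⟩ := mem_take_getD he
  have hjlen : j < (P.getD t' []).length := (ht_iff hsh hsort j _).mp ht'
  have hcell := cell_lt hsh hsort hrows hcols htt' (le_of_lt hcj) (Or.inr hcj)
    (by have := colHeight_le_len hsh j; omega) hjlen
  have hee : entryAt P t c = e := hce
  rw [← hee]
  exact not_lt.mpr (le_of_lt hcell)

include hsh hsort hcols in
lemma colentry_lt {a b j : ℕ} (hab : a < b) (hb : b < colHeight lam j) :
    entryAt P a j < entryAt P b j :=
  col_lt hsh hsort hcols hab (lt_of_lt_of_le hb (colHeight_le_len hsh j))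
    ((ht_iff hsh hsort j b).mp hb)

include hsh hsort hrows hcols in
lemma trow_bump {j r t : ℕ} (hr : r < colHeight lam j) (ht : t < r) :
    insertRow (trow P lam j r t) (tx P lam j r t)
      = (trow P lam j (r + 1) t, some (tx P lam j r (t + 1))) := by
  unfold trow tx
  rw [if_pos ht, if_pos (by omega)]
  have e1 : r + 1 - (t + 1) = r - t := by omega
  rw [e1]
  have e2 : colHeight lam j - (r + 1 - t) < colHeight lam j := by omega
  have hlt : entryAt P (colHeight lam j - (r + 1 - t)) j
      < entryAt P (colHeight lam j - (r - t)) j :=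
    colentry_lt hsh hsort hcols (by omega) (by omega)
  exact insertRow_append_last (take_lt hsh hsort hrows hcols (by omega) e2) hlt

include hsh hsort hrows hcols in
lemma trow_none {j r : ℕ} (hr : r < colHeight lam j) :
    insertRow (trow P lam j r r) (tx P lam j r r) = (trow P lam j (r + 1) r, none) := by
  unfold trow tx
  rw [if_neg (lt_irrefl r), if_pos (by omega), List.append_nil]
  have e1 : r + 1 - r = 1 := by omega
  rw [e1]
  exact insertRow_no_bump (take_lt hsh hsort hrows hcols (by omega) (by omega))

lemma trow_high {j r t : ℕ} (ht : r < t) : trow P lam j (r + 1) t = trow P lam j r t := by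
  unfold trow
  rw [if_neg (by omega), if_neg (by omega)]

include hsh hsort hrows hcols in
lemma step_insert {j r : ℕ} (hr : r < colHeight lam j) :
    insertTab (trunc P lam j r) (tx P lam j r 0) = trunc P lam j (r + 1) := by
  have hjP : colHeight lam j ≤ P.length := colHeight_le_len hsh j
  rw [trunc_eq, trunc_eq]
  by_cases hj0 : j = 0
  · subst hj0
    rw [if_pos rfl, if_pos rfl]
    rw [insertTab_range'_aux (trow P lam 0 r) (trow P lam 0 (r + 1)) (tx P lam 0 r) r r 0
      (by omega) (by omega)
      (fun t _ ht2 => trow_bump hsh hsort hrows hcols hr ht2)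
      (fun h => absurd h (by omega))
      (fun _ => by
        unfold trow tx
        rw [if_pos (by omega)]
        simp)
      (fun t hrt => trow_high hrt)]
    have hmax : max r (r + 1 - 0) = r + 1 := by
      rw [Nat.sub_zero, Nat.max_eq_right (by omega)]
    rw [hmax]
  · rw [if_neg hj0, if_neg hj0]
    have hrP : r < P.length := by omega
    rw [insertTab_range'_aux (trow P lam j r) (trow P lam j (r + 1)) (tx P lam j r) r
      P.length 0 (by omega) (by omega)
      (fun t _ ht2 => trow_bump hsh hsort hrows hcols hr ht2)
      (fun _ => trow_none hsh hsort hrows hcols hr)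
      (fun h => absurd h (by omega))
      (fun t hrt => trow_high hrt)]
    have hmax : max P.length (r + 1 - 0) = P.length := by
      rw [Nat.sub_zero, Nat.max_eq_left (by omega)]
    rw [hmax]

include hsh hsort in
lemma step_addBox {j r : ℕ} (hr : r < colHeight lam j) :
    addBox (qtrunc P lam j r) (trunc P lam j (r + 1)) (off lam j + r + 1)
      = qtrunc P lam j (r + 1) := by
  have hjP : colHeight lam j ≤ P.length := colHeight_le_len hsh j
  have hlenq : (qtrunc P lam j r).length = (if j = 0 then r else P.length) := by
    simp [qtrunc]
  have hlent : (trunc P lam j (r + 1)).length = (if j = 0 then r + 1 else P.length) := by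
    simp [trunc]
  have hfind : (List.range (trunc P lam j (r + 1)).length).find?
      (fun t => decide (((qtrunc P lam j r).getD t []).length
        < ((trunc P lam j (r + 1)).getD t []).length)) = some r := by
    apply find?_range_eq_some
    · rw [hlent]; by_cases hj0 : j = 0 <;> simp [hj0] <;> omega
    · -- q r = true
      have htr : (trunc P lam j (r + 1)).getD r []
          = (P.getD r []).take j ++ [entryAt P (colHeight lam j - (r + 1 - r)) j] := by
        rw [trunc, getD_map_range (by by_cases hj0 : j = 0 <;> simp [hj0] <;> omega) []]
        rw [if_pos (by omega)]
      by_cases hj0 : j = 0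
      · subst hj0
        have hq : (qtrunc P lam 0 r).getD r [] = [] := by
          rw [qtrunc, if_pos rfl]
          exact getD_map_range_ge le_rfl []
        rw [hq, htr]
        simp
      · have hq : (qtrunc P lam j r).getD r []
            = (List.range (min j (P.getD r []).length)).map (fun c => off lam c + r + 1) := by
          rw [qtrunc, getD_map_range (by simp [hj0]; omega) []]
          rw [if_neg (lt_irrefl r)]
          simp
        rw [hq, htr]
        simp
    · intro t htlt
      have hq : (qtrunc P lam j r).getD t []
          = (List.range (min j (P.getD t []).length)).map (fun c => off lam c + t + 1)
            ++ [off lam j + t + 1] := by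
        rw [qtrunc, getD_map_range (by by_cases hj0 : j = 0 <;> simp [hj0] <;> omega) []]
        rw [if_pos htlt]
      have htr : (trunc P lam j (r + 1)).getD t []
          = (P.getD t []).take j ++ [entryAt P (colHeight lam j - (r + 1 - t)) j] := by
        rw [trunc, getD_map_range (by by_cases hj0 : j = 0 <;> simp [hj0] <;> omega) []]
        rw [if_pos (by omega)]
      rw [hq, htr]
      simp [List.length_take]
  rw [addBox, hfind]
  dsimp only
  by_cases hj0 : j = 0
  · subst hj0
    rw [if_neg (by rw [hlenq]; simp)]
    rw [qtrunc, qtrunc, if_pos rfl, if_pos rfl, List.range_succ, List.map_append]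
    congr 1
    · apply List.map_congr_left
      intro t ht
      have := List.mem_range.mp ht
      rw [if_pos this, if_pos (by omega)]
    · simp
  · rw [if_pos (by rw [hlenq, if_neg hj0]; omega)]
    have hq : (qtrunc P lam j r).getD r []
        = (List.range (min j (P.getD r []).length)).map (fun c => off lam c + r + 1) := by
      rw [qtrunc, getD_map_range (by simp [hj0]; omega) []]
      rw [if_neg (lt_irrefl r)]
      simp
    rw [hq, qtrunc, qtrunc, if_neg hj0, if_neg hj0, set_map_range]
    apply List.map_congr_left
    intro t ht
    have htP := List.mem_range.mp ht
    by_cases hteq : t = r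
    · subst hteq
      rw [if_pos rfl, if_pos (by omega)]
    · rw [if_neg hteq]
      by_cases htr : t < r
      · rw [if_pos htr, if_pos (by omega)]
      · rw [if_neg htr, if_neg (by omega)]

end Steps



def colword (P : List (List ℕ)) (j : ℕ) : List ℕ :=
  (((List.range P.length).filter (fun i => decide (j < (P.getD i []).length))).reverse).map
    (fun i => entryAt P i j)

lemma colReading_eq (P : List (List ℕ)) :
    colReading P = ((List.range ((P.getD 0 []).length)).map (colword P)).flatten := rfl

lemma RSKword_single (a k : ℕ) (T Q : List (List ℕ)) :
    RSKword [a] k (T, Q) = (insertTab T a, addBox Q (insertTab T a) k) := rfl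

section Bdry

variable {P : List (List ℕ)} {lam : List ℕ}
variable (hsh : P.map List.length = lam) (hsort : lam.Pairwise (· ≥ ·))
variable (hrows : ∀ r ∈ P, r.Pairwise (· < ·))
variable (hcols : ∀ i j : ℕ, i + 1 < P.length → j < (P.getD (i + 1) []).length →
      entryAt P i j < entryAt P (i + 1) j)
variable (hpos : ∀ x ∈ lam, 0 < x)

include hsh hpos in
lemma colHeight_zero : colHeight lam 0 = P.length := by
  unfold colHeight
  rw [List.filter_eq_self.mpr (fun x hx => by simpa using hpos x hx)]
  exact lam_len hsh

include hsh hsort hpos in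
lemma trunc_top (j : ℕ) :
    trunc P lam j (colHeight lam j) = trunc P lam (j + 1) 0 := by
  unfold trunc
  have hM : (if j = 0 then colHeight lam j else P.length) = P.length := by
    by_cases hj0 : j = 0
    · rw [if_pos hj0, hj0, colHeight_zero hsh hpos]
    · rw [if_neg hj0]
  rw [hM, if_neg (Nat.succ_ne_zero j)]
  apply List.map_congr_left
  intro t ht
  have htP := List.mem_range.mp ht
  by_cases hth : t < colHeight lam j
  · rw [if_pos hth, if_neg (by omega)]
    have he : colHeight lam j - (colHeight lam j - t) = t := by omega
    rw [he, List.append_nil]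
    have hjlen : j < (P.getD t []).length := (ht_iff hsh hsort j t).mp hth
    rw [List.take_succ, List.getElem?_eq_getElem hjlen]
    congr 1
    simp only [Option.toList_some]
    congr 1
    show (P.getD t []).getD j 0 = _
    rw [List.getD_eq_getElem _ _ hjlen]
  · rw [if_neg hth, if_neg (by omega), List.append_nil, List.append_nil]
    have hlen : (P.getD t []).length ≤ j := by
      by_contra hcon
      exact hth ((ht_iff hsh hsort j t).mpr (by omega))
    rw [List.take_of_length_le hlen, List.take_of_length_le (by omega)]

include hsh hsort hpos in
lemma qtrunc_top (j : ℕ) :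
    qtrunc P lam j (colHeight lam j) = qtrunc P lam (j + 1) 0 := by
  unfold qtrunc
  have hM : (if j = 0 then colHeight lam j else P.length) = P.length := by
    by_cases hj0 : j = 0
    · rw [if_pos hj0, hj0, colHeight_zero hsh hpos]
    · rw [if_neg hj0]
  rw [hM, if_neg (Nat.succ_ne_zero j)]
  apply List.map_congr_left
  intro t ht
  have htP := List.mem_range.mp ht
  by_cases hth : t < colHeight lam j
  · rw [if_pos hth, if_neg (by omega)]
    have hjlen : j < (P.getD t []).length := (ht_iff hsh hsort j t).mp hth
    rw [Nat.min_eq_left (by omega), Nat.min_eq_left (by omega), List.append_nil,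
      List.range_succ, List.map_append]
    simp
  · rw [if_neg hth, if_neg (by omega), List.append_nil, List.append_nil]
    have hlen : (P.getD t []).length ≤ j := by
      by_contra hcon
      exact hth ((ht_iff hsh hsort j t).mpr (by omega))
    rw [Nat.min_eq_right hlen, Nat.min_eq_right (by omega)]

include hsh hsort hpos in
lemma trunc_full : trunc P lam (lam.getD 0 0) 0 = P := by
  by_cases hP : P.length = 0
  · have : P = [] := List.length_eq_zero_iff.mp hP
    subst this
    simp [trunc]
  · have hw0 : lam.getD 0 0 ≠ 0 := by
      have h1 : (P.getD 0 []).length ≠ 0 := by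
        rw [List.getD_eq_getElem _ _ (by omega)]
        have : P[0] ∈ P := List.getElem_mem _
        have h2 : P[0].length ∈ lam := by
          rw [← hsh]; exact List.mem_map_of_mem this
        have := hpos _ h2
        omega
      rw [len_getD_lam hsh] at h1
      exact h1
    unfold trunc
    rw [if_neg hw0]
    apply List.ext_getElem (by simp)
    intro t ht1 ht2
    simp only [List.getElem_map, List.getElem_range]
    rw [if_neg (by omega), List.append_nil]
    have hle : (P.getD t []).length ≤ lam.getD 0 0 := by
      rw [← len_getD_lam hsh]
      exact len_anti hsh hsort (Nat.zero_le t)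
    rw [List.take_of_length_le hle, List.getD_eq_getElem _ _ ht2]

include hsh hsort hpos in
lemma qtrunc_full : qtrunc P lam (lam.getD 0 0) 0 = colStd lam := by
  by_cases hP : P.length = 0
  · have hPe : P = [] := List.length_eq_zero_iff.mp hP
    subst hPe
    have : lam = [] := hsh.symm
    subst this
    simp [qtrunc, colStd]
  · have hw0 : lam.getD 0 0 ≠ 0 := by
      have h1 : (P.getD 0 []).length ≠ 0 := by
        rw [List.getD_eq_getElem _ _ (by omega)]
        have : P[0] ∈ P := List.getElem_mem _
        have h2 : P[0].length ∈ lam := by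
          rw [← hsh]; exact List.mem_map_of_mem this
        have := hpos _ h2
        omega
      rw [len_getD_lam hsh] at h1
      exact h1
    unfold qtrunc colStd
    rw [if_neg hw0, ← lam_len hsh]
    apply List.map_congr_left
    intro t ht
    have htP := List.mem_range.mp ht
    rw [if_neg (by omega), List.append_nil]
    have hle : (P.getD t []).length ≤ lam.getD 0 0 := by
      rw [← len_getD_lam hsh]
      exact len_anti hsh hsort (Nat.zero_le t)
    rw [Nat.min_eq_right hle, len_getD_lam hsh]
    apply List.map_congr_left
    intro c _
    rw [off]

include hsh hsort in
lemma colword_eq (j : ℕ) :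
    colword P j
      = (List.range (colHeight lam j)).map (fun t => entryAt P (colHeight lam j - 1 - t) j) := by
  unfold colword
  have hcnt : (List.range P.length).countP (fun i => decide (j < (P.getD i []).length))
      = colHeight lam j := by
    rw [countP_range_getD P ([] : List ℕ) (fun row => decide (j < row.length))]
    unfold colHeight
    rw [← hsh, ← List.countP_eq_length_filter, List.countP_map]
    rfl
  have hfil := filter_range_eq_range (q := fun i => decide (j < (P.getD i []).length)) P.length
    (by
      intro a b hab hbn hqb
      simp only [decide_eq_true_eq] at hqb ⊢
      exact lt_of_lt_of_le hqb (len_anti hsh hsort hab))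
  rw [hfil, hcnt]
  conv_lhs => rw [List.range_eq_range', List.reverse_range']
  rw [List.map_map]
  apply List.map_congr_left
  intro t _
  simp [Function.comp]

include hsh hsort in
lemma colword_len (j : ℕ) : (colword P j).length = colHeight lam j := by
  rw [colword_eq hsh hsort]; simp

include hsh hsort hrows hcols in
lemma forward_inner (j : ℕ) :
    ∀ r, r ≤ colHeight lam j →
    RSKword ((colword P j).take r) (off lam j + 1) (trunc P lam j 0, qtrunc P lam j 0)
      = (trunc P lam j r, qtrunc P lam j r) := by
  intro r
  induction r with
  | zero => intro _; simp [RSKword]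
  | succ r ih =>
    intro hr1
    have hr : r < colHeight lam j := by omega
    have hrlen : r < (colword P j).length := by rw [colword_len hsh hsort]; omega
    have htake : (colword P j).take (r + 1) = (colword P j).take r ++ [tx P lam j r 0] := by
      rw [List.take_succ, List.getElem?_eq_getElem hrlen]
      congr 1
      simp only [Option.toList_some]
      congr 1
      have helem : (colword P j)[r]'hrlen = entryAt P (colHeight lam j - 1 - r) j := by
        rw [List.getElem_of_eq (colword_eq hsh hsort j) hrlen]
        simp
      rw [helem]
      unfold tx
      congr 1
      omega
    rw [htake, RSKword_append, ih (by omega)]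
    have hlen2 : ((colword P j).take r).length = r := by
      rw [List.length_take, colword_len hsh hsort, Nat.min_eq_left (by omega)]
    rw [hlen2, RSKword_single]
    have hk : off lam j + 1 + r = off lam j + r + 1 := by omega
    rw [hk, step_insert hsh hsort hrows hcols hr, step_addBox hsh hsort hr]

include hsh hsort hrows hcols hpos in
lemma forward_outer : ∀ j : ℕ,
    RSKword (((List.range j).map (colword P)).flatten) 1 ([], [])
      = (trunc P lam j 0, qtrunc P lam j 0) := by
  intro j
  induction j with
  | zero => simp [RSKword, trunc, qtrunc]
  | succ j ih =>
    rw [List.range_succ, List.map_append, List.flatten_append, RSKword_append, ih]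
    have hcnt : (((List.range j).map (colword P)).flatten).length = off lam j := by
      rw [List.length_flatten, List.map_map]
      unfold off
      congr 1
      apply List.map_congr_left
      intro c _
      exact colword_len hsh hsort c
    rw [hcnt]
    simp only [List.map_cons, List.map_nil, List.flatten_cons, List.flatten_nil,
      List.append_nil]
    have hfull : colword P j = (colword P j).take (colHeight lam j) := by
      rw [← colword_len hsh hsort j, List.take_length]
    rw [hfull]
    have hk : 1 + off lam j = off lam j + 1 := by omega
    rw [hk, forward_inner hsh hsort hrows hcols j (colHeight lam j) le_rfl,
      trunc_top hsh hsort hpos j, qtrunc_top hsh hsort hpos j]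

include hsh hsort hrows hcols hpos in
lemma forward_rsk : RSKword (colReading P) 1 ([], []) = (P, colStd lam) := by
  rw [colReading_eq, len_getD_lam hsh 0, forward_outer hsh hsort hrows hcols hpos,
    trunc_full hsh hsort hpos, qtrunc_full hsh hsort hpos]

end Bdry


/-- The permutation whose RSK recording tableau is the column-superstandard tableau
`CSS(lam)` has one-line notation given by the column reading word (columns left to right,
bottom to top) of its insertion tableau. -/

theorem rsk_column_superstandard (n : ℕ) (lam : List ℕ) (hlam : IsPartition n lam)
    (P : List (List ℕ)) (hP : IsSYT lam P) (v : Perm (Fin n))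
    (hv : RSKmap n v = (P, colStd lam)) :
    oneLine n v = colReading P := by
  obtain ⟨hsort, hpos, hsum⟩ := hlam
  obtain ⟨hsh, hrows, hcols, hperm⟩ := hP
  rw [hsum] at hperm
  have hfwd := forward_rsk hsh hsort hrows hcols hpos
  have hvv : RSKword (oneLine n v) 1 ([], []) = (P, colStd lam) := hv
  have hpv : P.flatten.Perm (oneLine n v) := by
    have h := RSKword_fst_flatten_perm (oneLine n v) 1 [] []
    rw [hvv] at h
    simpa using h
  have hpc : P.flatten.Perm (colReading P) := by
    have h := RSKword_fst_flatten_perm (colReading P) 1 [] []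
    rw [hfwd] at h
    simpa using h
  have hnd : P.flatten.Nodup := hperm.nodup_iff.mpr (List.nodup_range')
  have h1 : ((oneLine n v) ++ ([] : List (List ℕ)).flatten).Nodup := by
    simpa using hpv.nodup_iff.mp hnd
  have h2 : ((colReading P) ++ ([] : List (List ℕ)).flatten).Nodup := by
    simpa using hpc.nodup_iff.mp hnd
  have hlen : (oneLine n v).length = (colReading P).length :=
    hpv.length_eq.symm.trans hpc.length_eq
  obtain ⟨heq, -, -⟩ := rsk_inj (oneLine n v) (colReading P) [] [] [] [] 1 hlen h1 h2
    (by simp) (by simp) (by simp) (by simp) (by simp) (by simp) rfl rfl (by simp) (by simp)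
    (hvv.trans hfwd.symm)
  exact heq

end KLPaper
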